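/- Define A_h := Σ_{j=0}^κ Σ_{i=0}^{min(κ, j+1)} h^{j+1-i} P_i A P_j for h ≥ 0. Then for h > 0, A_h = h S(1/h) A S(h), and moreover A_h − A_0 = h Σ_{j=0}^κ Σ_{i=0}^j h^{j-i} P_i A P_j; consequently there is a constant C > 0 such that ‖A_h − A_0‖ ≤ C h for all 0 < h ≤ 1. -/
import Mathlib


open scoped RealInnerProductSpace

set_option synthInstance.maxHeartbeats 1000000
set_option maxHeartbeats 1000000

private lemma smul_mul_aux (N : ℕ) (c : ℝ)
    (X Y : EuclideanSpace ℝ (Fin N) →L[ℝ] EuclideanSpace ℝ (Fin N)) :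
    (c • X) * Y = c • (X * Y) := by ext x; simp

private lemma smul_zero_aux (N : ℕ) (c : ℝ) :
    c • (0 : EuclideanSpace ℝ (Fin N) →L[ℝ] EuclideanSpace ℝ (Fin N)) = 0 := by ext x; simp

private lemma norm_smul_aux (N : ℕ) (c : ℝ)
    (X : EuclideanSpace ℝ (Fin N) →L[ℝ] EuclideanSpace ℝ (Fin N)) :
    ‖c • X‖ = ‖c‖ * ‖X‖ := norm_smul c X

private lemma mul_smul_aux (N : ℕ) (c : ℝ)
    (X Y : EuclideanSpace ℝ (Fin N) →L[ℝ] EuclideanSpace ℝ (Fin N)) :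
    X * (c • Y) = c • (X * Y) := by ext x; simp

/-- properties of the rescaled drift matrices
`A_h = Σ_j Σ_{i ≤ min(κ, j+1)} h^{j+1-i} P_i A P_j`: for `h > 0`, `A_h = h S(1/h) A S(h)`,
`A_h − A_0 = h Σ_j Σ_{i ≤ j} h^{j-i} P_i A P_j`, and `‖A_h − A_0‖ ≤ C h` for `0 < h ≤ 1`. -/
theorem rescaled_drift_properties (N κ : ℕ)
    (E : ℕ → Submodule ℝ (EuclideanSpace ℝ (Fin N)))
    (hspan : (⨆ i ∈ Finset.range (κ + 1), E i) = ⊤)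
    (horth : ∀ i j, i ≠ j → i ≤ κ → j ≤ κ → ∀ x ∈ E i, ∀ y ∈ E j, ⟪x, y⟫ = 0)
    (P : ℕ → EuclideanSpace ℝ (Fin N) →L[ℝ] EuclideanSpace ℝ (Fin N))
    (hPmem : ∀ i x, P i x ∈ E i)
    (hPortho : ∀ i x, ∀ y ∈ E i, ⟪x - P i x, y⟫ = 0)
    (AL : EuclideanSpace ℝ (Fin N) →L[ℝ] EuclideanSpace ℝ (Fin N))
    (hcompat : ∀ i j, j + 1 < i → i ≤ κ → j ≤ κ → P i * AL * P j = 0)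
    (S : ℝ → EuclideanSpace ℝ (Fin N) →L[ℝ] EuclideanSpace ℝ (Fin N))
    (hS : ∀ r, S r = ∑ i ∈ Finset.range (κ + 1), r ^ i • P i)
    (A0 : EuclideanSpace ℝ (Fin N) →L[ℝ] EuclideanSpace ℝ (Fin N))
    (hA0 : A0 = ∑ j ∈ Finset.range κ, P (j + 1) * AL * P j)
    (Ah : ℝ → EuclideanSpace ℝ (Fin N) →L[ℝ] EuclideanSpace ℝ (Fin N))
    (hAh : ∀ h, Ah h = ∑ j ∈ Finset.range (κ + 1), ∑ i ∈ Finset.range (min κ (j + 1) + 1),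
      h ^ (j + 1 - i) • (P i * AL * P j)) :
    (∀ h : ℝ, 0 < h → Ah h = h • (S h⁻¹ * AL * S h)) ∧
    (∀ h : ℝ, Ah h - A0 =
      h • ∑ j ∈ Finset.range (κ + 1), ∑ i ∈ Finset.range (j + 1),
        h ^ (j - i) • (P i * AL * P j)) ∧
    (∃ C : ℝ, 0 < C ∧ ∀ h : ℝ, 0 < h → h ≤ 1 → ‖Ah h - A0‖ ≤ C * h) := by
  have key : ∀ h : ℝ, Ah h - A0 =
      h • ∑ j ∈ Finset.range (κ + 1), ∑ i ∈ Finset.range (j + 1),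
        h ^ (j - i) • (P i * AL * P j) := by
    intro h
    rw [hAh, hA0]
    have hsplit : ∀ j ∈ Finset.range (κ + 1),
        (∑ i ∈ Finset.range (min κ (j + 1) + 1), h ^ (j + 1 - i) • (P i * AL * P j))
        = (∑ i ∈ Finset.range (j + 1), h ^ (j + 1 - i) • (P i * AL * P j))
          + (if j < κ then P (j + 1) * AL * P j else 0) := by
      intro j hj
      rcases lt_or_eq_of_le (Nat.lt_succ_iff.mp (Finset.mem_range.mp hj)) with hlt | heq
      · rw [if_pos hlt, Nat.min_eq_right (by omega), Finset.sum_range_succ]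
        simp
      · rw [if_neg (by omega), Nat.min_eq_left (by omega), heq, add_zero]
    rw [Finset.sum_congr rfl hsplit, Finset.sum_add_distrib]
    have h2 : ∑ j ∈ Finset.range (κ + 1), (if j < κ then P (j + 1) * AL * P j else 0)
        = ∑ j ∈ Finset.range κ, P (j + 1) * AL * P j := by
      rw [Finset.sum_range_succ, if_neg (lt_irrefl κ), add_zero]
      exact Finset.sum_congr rfl fun j hj => if_pos (Finset.mem_range.mp hj)
    rw [h2, add_sub_cancel_right, Finset.smul_sum]
    refine Finset.sum_congr rfl fun j hj => ?_
    rw [Finset.smul_sum]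
    refine Finset.sum_congr rfl fun i hi => ?_
    have hij : i ≤ j := Nat.lt_succ_iff.mp (Finset.mem_range.mp hi)
    rw [smul_smul, ← pow_succ', show j - i + 1 = j + 1 - i by omega]
  refine ⟨?_, key, ?_⟩
  · intro h hh
    have hne : h ≠ 0 := ne_of_gt hh
    have expand : h • (S h⁻¹ * AL * S h)
        = ∑ i ∈ Finset.range (κ + 1), ∑ j ∈ Finset.range (κ + 1),
            (h * (h⁻¹ ^ i * h ^ j)) • (P i * AL * P j) := by
      rw [hS, hS, Finset.sum_mul, Finset.sum_mul, Finset.smul_sum]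
      refine Finset.sum_congr rfl fun i _ => ?_
      rw [smul_mul_aux, smul_mul_aux, Finset.mul_sum, Finset.smul_sum, Finset.smul_sum]
      refine Finset.sum_congr rfl fun j _ => ?_
      rw [mul_smul_aux, smul_smul, smul_smul, mul_assoc]
    rw [hAh, expand, Finset.sum_comm]
    refine Finset.sum_congr rfl fun j hj => ?_
    have hjκ : j ≤ κ := Nat.lt_succ_iff.mp (Finset.mem_range.mp hj)
    have hsub : Finset.range (min κ (j + 1) + 1) ⊆ Finset.range (κ + 1) := by
      apply Finset.range_subset_range.mpr; omega
    rw [← Finset.sum_subset hsub]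
    · refine Finset.sum_congr rfl fun i hi => ?_
      have hij : i ≤ j + 1 := by
        have := Finset.mem_range.mp hi; omega
      congr 1
      rw [pow_sub₀ h hne hij, mul_comm (h⁻¹ ^ i), ← mul_assoc, ← pow_succ', inv_pow]
    · intro i hiR hiN
      have hi1 : min κ (j + 1) < i := by
        have := Finset.mem_range.mp hiR
        simp only [Finset.mem_range] at hiN; omega
      have hiκ : i ≤ κ := Nat.lt_succ_iff.mp (Finset.mem_range.mp hiR)
      have : j + 1 < i := by omega
      rw [hcompat i j this hiκ hjκ, smul_zero_aux]
  · refine ⟨1 + ∑ j ∈ Finset.range (κ + 1), ∑ i ∈ Finset.range (j + 1),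
      ‖P i * AL * P j‖, by positivity, fun h hh h1 => ?_⟩
    rw [key h, mul_comm, norm_smul_aux, Real.norm_eq_abs, abs_of_pos hh]
    apply mul_le_mul_of_nonneg_left _ hh.le
    calc ‖∑ j ∈ Finset.range (κ + 1), ∑ i ∈ Finset.range (j + 1),
          h ^ (j - i) • (P i * AL * P j)‖
        ≤ ∑ j ∈ Finset.range (κ + 1), ∑ i ∈ Finset.range (j + 1),
          ‖h ^ (j - i) • (P i * AL * P j)‖ := by
          refine (norm_sum_le _ _).trans (Finset.sum_le_sum fun j hj => norm_sum_le _ _)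
      _ ≤ ∑ j ∈ Finset.range (κ + 1), ∑ i ∈ Finset.range (j + 1), ‖P i * AL * P j‖ := by
          refine Finset.sum_le_sum fun j hj => Finset.sum_le_sum fun i hi => ?_
          calc ‖h ^ (j - i) • (P i * AL * P j)‖
              = ‖h ^ (j - i)‖ * ‖P i * AL * P j‖ := norm_smul_aux N _ _
            _ ≤ 1 * ‖P i * AL * P j‖ := by
                apply mul_le_mul_of_nonneg_right _ (norm_nonneg _)
                rw [Real.norm_eq_abs, abs_of_pos (pow_pos hh _)]
                exact pow_le_one₀ hh.le h1
            _ = ‖P i * AL * P j‖ := one_mul _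
      _ ≤ _ := by linarith
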